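/- Consider the sweeping dynamics in ℝ² with moving set C(t) = {x : x₂ ≤ 1, t·x₁ ≤ x₂} for t ∈ [0,1] and initial point x₀ = (x_{0,1}, x_{0,2}) with x_{0,2} < x_{0,1} (so x₀ lies where the moving constraint eventually binds) and ‖x₀‖ ≥ √2. Define t₁ := x_{0,2}/x_{0,1} and t₂ := 1/√(‖x₀‖² − 1), and set x(t) := x₀ for t ∈ [0,t₁], x(t) := (‖x₀‖/√(1+t²)) · (1, t) for t ∈ (t₁, t₂), and x(t) := (1/t, 1) for t ∈ [t₂, 1]. Then x is Lipschitz continuous on [0,1], x(t) ∈ C(t) for all t, and −ẋ(t) ∈ N_{C(t)}(x(t)) for a.e. t ∈ [0,1]. -/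

import Mathlib

open Set MeasureTheory
open scoped RealInnerProductSpace

noncomputable def vec2 (a b : ℝ) : EuclideanSpace ℝ (Fin 2) :=
  (WithLp.equiv 2 (Fin 2 → ℝ)).symm ![a, b]

@[simp] lemma vec2_apply0 (a b : ℝ) : vec2 a b 0 = a := rfl
@[simp] lemma vec2_apply1 (a b : ℝ) : vec2 a b 1 = b := rfl

lemma euclid_ext {x y : EuclideanSpace ℝ (Fin 2)} (h0 : x 0 = y 0) (h1 : x 1 = y 1) : x = y := by
  ext i; fin_cases i
  · exact h0
  · exact h1

lemma inner_eq2 (x y : EuclideanSpace ℝ (Fin 2)) : ⟪x, y⟫ = x 0 * y 0 + x 1 * y 1 := by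
  simp [PiLp.inner_apply, Fin.sum_univ_two, mul_comm]

lemma norm_eq2 (x : EuclideanSpace ℝ (Fin 2)) : ‖x‖ = Real.sqrt (x 0 ^ 2 + x 1 ^ 2) := by
  rw [EuclideanSpace.norm_eq]
  simp [Fin.sum_univ_two, sq_abs]

lemma vec2_decomp (a b : ℝ) : vec2 a b = a • vec2 1 0 + b • vec2 0 1 := by
  apply euclid_ext <;> simp

lemma inner_mid (A s t : ℝ) (y : EuclideanSpace ℝ (Fin 2)) (hs : s ≠ 0)
    (hs2 : s ^ 2 = 1 + t ^ 2) :
    ⟪-((A / s) • vec2 0 1 + (-(A * t) / s ^ 3) • vec2 1 t), y - (A / s) • vec2 1 t⟫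
      = (A / s ^ 3) * (t * y 0 - y 1) := by
  rw [inner_eq2]
  simp only [PiLp.neg_apply, PiLp.add_apply, PiLp.sub_apply, PiLp.smul_apply,
    vec2_apply0, vec2_apply1, smul_eq_mul]
  field_simp
  linear_combination (A ^ 2 * t - A * s * y 1) * hs2

lemma inner_third (t : ℝ) (y : EuclideanSpace ℝ (Fin 2)) :
    ⟪-((-(t ^ 2)⁻¹) • vec2 1 0), y - vec2 t⁻¹ 1⟫ = (t ^ 2)⁻¹ * (y 0 - t⁻¹) := by
  rw [inner_eq2]
  simp only [PiLp.neg_apply, PiLp.sub_apply, PiLp.smul_apply,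
    vec2_apply0, vec2_apply1, smul_eq_mul]
  ring

lemma norm_mid_le (A t : ℝ) (hA : 0 ≤ A) :
    ‖(A / Real.sqrt (1 + t ^ 2)) • vec2 0 1
      + (-(A * t) / (Real.sqrt (1 + t ^ 2)) ^ 3) • vec2 1 t‖ ≤ A := by
  set s := Real.sqrt (1 + t ^ 2) with hsdef
  have hspos : 0 < s := Real.sqrt_pos.2 (by positivity)
  have hs2 : s ^ 2 = 1 + t ^ 2 := Real.sq_sqrt (by positivity)
  have hs1 : 1 ≤ s := by nlinarith
  rw [norm_eq2]
  have hd0 : ((A / s) • vec2 0 1 + (-(A * t) / s ^ 3) • vec2 1 t) 0 = -(A * t) / s ^ 3 := by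
    simp
  have hd1 : ((A / s) • vec2 0 1 + (-(A * t) / s ^ 3) • vec2 1 t) 1 = A / s ^ 3 := by
    simp only [PiLp.add_apply, PiLp.smul_apply, vec2_apply0, vec2_apply1, smul_eq_mul, mul_one]
    field_simp
    linear_combination A * hs2
  rw [hd0, hd1]
  have h1 : (-(A * t) / s ^ 3) ^ 2 + (A / s ^ 3) ^ 2 = (A / s ^ 2) ^ 2 := by
    field_simp
    linear_combination (-(A ^ 2)) * hs2
  rw [h1, Real.sqrt_sq (by positivity)]
  rw [div_le_iff₀ (by positivity)]
  nlinarith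

lemma norm_third_eq (t : ℝ) : ‖(-(t ^ 2)⁻¹) • vec2 1 0‖ = (t ^ 2)⁻¹ := by
  rw [norm_eq2]
  simp only [PiLp.smul_apply, vec2_apply0, vec2_apply1, smul_eq_mul, mul_one, mul_zero]
  rw [show (-(t ^ 2)⁻¹) ^ 2 + 0 ^ 2 = ((t ^ 2)⁻¹) ^ 2 by ring, Real.sqrt_sq (by positivity)]

lemma hasDerivAt_s (t : ℝ) :
    HasDerivAt (fun t : ℝ => Real.sqrt (1 + t ^ 2)) (t / Real.sqrt (1 + t ^ 2)) t := by
  have h1 : HasDerivAt (fun t : ℝ => 1 + t ^ 2) (2 * t) t := by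
    simpa using (hasDerivAt_pow 2 t).const_add 1
  have h2 : (1 : ℝ) + t ^ 2 ≠ 0 := by positivity
  have := (Real.hasDerivAt_sqrt h2).comp t h1
  refine this.congr_deriv ?_
  field_simp

lemma hasDerivAt_h (A t : ℝ) :
    HasDerivAt (fun t : ℝ => A / Real.sqrt (1 + t ^ 2))
      (-(A * t) / (Real.sqrt (1 + t ^ 2)) ^ 3) t := by
  have hs : (0:ℝ) < Real.sqrt (1 + t ^ 2) := Real.sqrt_pos.2 (by positivity)
  have := (hasDerivAt_const t A).div (hasDerivAt_s t) (ne_of_gt hs)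
  refine this.congr_deriv ?_
  set s := Real.sqrt (1 + t ^ 2) with hsdef
  have h2 : s ≠ 0 := ne_of_gt hs
  have h3 : s ^ 2 = 1 + t ^ 2 := Real.sq_sqrt (by positivity)
  field_simp
  ring

lemma hasDerivAt_mid (A t : ℝ) :
    HasDerivAt (fun t : ℝ => (A / Real.sqrt (1 + t ^ 2)) • vec2 1 t)
      ((A / Real.sqrt (1 + t ^ 2)) • vec2 0 1
        + (-(A * t) / (Real.sqrt (1 + t ^ 2)) ^ 3) • vec2 1 t) t := by
  have hv : HasDerivAt (fun t : ℝ => vec2 1 t) (vec2 0 1) t := by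
    have : HasDerivAt (fun t : ℝ => (1:ℝ) • vec2 1 0 + t • vec2 0 1) ((1:ℝ) • vec2 0 1) t := by
      exact ((hasDerivAt_id t).smul_const (vec2 0 1)).const_add _
    simp only [one_smul] at this
    apply this.congr_of_eventuallyEq
    filter_upwards with s
    rw [vec2_decomp 1 s, one_smul]
  exact (hasDerivAt_h A t).smul hv

lemma hasDerivAt_third (t : ℝ) (ht : t ≠ 0) :
    HasDerivAt (fun t : ℝ => vec2 t⁻¹ 1) ((-(t ^ 2)⁻¹) • vec2 1 0) t := by
  have : HasDerivAt (fun t : ℝ => t⁻¹ • vec2 1 0 + (1:ℝ) • vec2 0 1)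
      ((-(t ^ 2)⁻¹) • vec2 1 0) t := by
    simpa using ((hasDerivAt_inv ht).smul_const (vec2 1 0)).add_const ((1:ℝ) • vec2 0 1)
  apply this.congr_of_eventuallyEq
  filter_upwards with s
  rw [vec2_decomp s⁻¹ 1]

lemma lip_glue {E : Type*} [NormedAddCommGroup E] {K : NNReal} {f : ℝ → E} {a b c : ℝ}
    (hab : a ≤ b) (hbc : b ≤ c)
    (h1 : LipschitzOnWith K f (Icc a b)) (h2 : LipschitzOnWith K f (Icc b c)) :
    LipschitzOnWith K f (Icc a c) := by
  rw [lipschitzOnWith_iff_dist_le_mul] at *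
  have key : ∀ x ∈ Icc a c, ∀ y ∈ Icc a c, x ≤ y → dist (f x) (f y) ≤ K * dist x y := by
    intro x hx y hy hxy
    by_cases hyb : y ≤ b
    · exact h1 x ⟨hx.1, le_trans hxy hyb⟩ y ⟨hy.1, hyb⟩
    · by_cases hbx : b ≤ x
      · exact h2 x ⟨hbx, le_trans hxy hy.2⟩ y ⟨le_trans hbx hxy, hy.2⟩
      · push_neg at hyb hbx
        have d1 := h1 x ⟨hx.1, hbx.le⟩ b ⟨hab, le_refl b⟩
        have d2 := h2 b ⟨le_refl b, hbc⟩ y ⟨hyb.le, hy.2⟩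
        calc dist (f x) (f y) ≤ dist (f x) (f b) + dist (f b) (f y) := dist_triangle _ _ _
          _ ≤ K * dist x b + K * dist b y := add_le_add d1 d2
          _ = K * (dist x b + dist b y) := by ring
          _ = K * dist x y := by
              rw [Real.dist_eq, Real.dist_eq, Real.dist_eq,
                abs_of_nonpos (by linarith), abs_of_nonpos (by linarith),
                abs_of_nonpos (by linarith)]
              ring
  intro x hx y hy
  rcases le_total x y with h | h
  · exact key x hx y hy h
  · rw [dist_comm (f x), dist_comm x]; exact key y hy x hx h

lemma lip_congr {E : Type*} [NormedAddCommGroup E] {K : NNReal} {f g : ℝ → E} {s : Set ℝ}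
    (h : LipschitzOnWith K g s) (he : EqOn f g s) : LipschitzOnWith K f s := by
  intro x hx y hy
  rw [he hx, he hy]
  exact h hx hy

set_option maxHeartbeats 1000000 in
theorem explicit_sweeping_solution
    (C : ℝ → Set (EuclideanSpace ℝ (Fin 2)))
    (hC : ∀ t, C t = {x : EuclideanSpace ℝ (Fin 2) | x 1 ≤ 1 ∧ t * x 0 ≤ x 1})
    (x₀ : EuclideanSpace ℝ (Fin 2)) (hx₀C : x₀ ∈ C 0)
    (h12 : x₀ 1 < x₀ 0) (hnorm : Real.sqrt 2 ≤ ‖x₀‖)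
    (t₁ t₂ : ℝ) (ht₁ : t₁ = x₀ 1 / x₀ 0) (ht₂ : t₂ = 1 / Real.sqrt (‖x₀‖ ^ 2 - 1))
    (xf : ℝ → EuclideanSpace ℝ (Fin 2))
    (hxf : ∀ t, xf t = if t ≤ t₁ then x₀
      else if t < t₂ then (‖x₀‖ / Real.sqrt (1 + t ^ 2)) • vec2 1 t
      else vec2 t⁻¹ 1) :
    (∃ K : NNReal, LipschitzOnWith K xf (Icc 0 1)) ∧
    (∀ t ∈ Icc (0:ℝ) 1, xf t ∈ C t) ∧
    (∀ᵐ t ∂(volume.restrict (Ioo (0:ℝ) 1)), ∃ d : EuclideanSpace ℝ (Fin 2),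
      HasDerivAt xf d t ∧ ∀ y ∈ C t, ⟪-d, y - xf t⟫ ≤ 0) := by
  have hC0 := hx₀C
  rw [hC 0] at hC0
  obtain ⟨hx1le, hx1nn'⟩ := hC0
  have hx1nn : 0 ≤ x₀ 1 := by simpa using hx1nn'
  have hx0pos : 0 < x₀ 0 := lt_of_le_of_lt hx1nn h12
  set A := ‖x₀‖ with hA
  have hA2 : A ^ 2 = x₀ 0 ^ 2 + x₀ 1 ^ 2 := by
    rw [hA, norm_eq2, Real.sq_sqrt (by positivity)]
  have hApos : 0 < A := lt_of_lt_of_le (Real.sqrt_pos.2 (by norm_num)) hnorm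
  have hA2ge : 2 ≤ A ^ 2 := by
    nlinarith [Real.sqrt_nonneg 2, Real.sq_sqrt (by norm_num : (0:ℝ) ≤ 2), hnorm]
  have hA1 : (1:ℝ) ≤ A ^ 2 - 1 := by linarith
  have hsq1 : (1:ℝ) ≤ Real.sqrt (A ^ 2 - 1) := by
    have := Real.sqrt_le_sqrt hA1
    rwa [Real.sqrt_one] at this
  have hsqpos : 0 < Real.sqrt (A ^ 2 - 1) := lt_of_lt_of_le one_pos hsq1
  have hst : Real.sqrt (A ^ 2 - 1) ^ 2 = A ^ 2 - 1 := Real.sq_sqrt (by linarith)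
  have ht₂pos : 0 < t₂ := by rw [ht₂]; positivity
  have ht₂le1 : t₂ ≤ 1 := by
    rw [ht₂, div_le_one hsqpos]; exact hsq1
  have ht₂sq : t₂ ^ 2 * (A ^ 2 - 1) = 1 := by
    rw [ht₂, div_pow, one_pow, hst]
    field_simp
  have ht₁nn : 0 ≤ t₁ := by rw [ht₁]; positivity
  have ht₁x : t₁ * x₀ 0 = x₀ 1 := by rw [ht₁]; field_simp
  have ht₁t₂ : t₁ ≤ t₂ := by
    rw [ht₁, ht₂, div_le_div_iff₀ hx0pos hsqpos]
    have hsqle : (x₀ 1 * Real.sqrt (A ^ 2 - 1)) ^ 2 ≤ x₀ 0 ^ 2 := by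
      have haux : (0:ℝ) ≤ (1 - x₀ 1 ^ 2) * (x₀ 0 ^ 2 + x₀ 1 ^ 2) := by
        apply mul_nonneg
        · nlinarith
        · positivity
      nlinarith [hst, hA2]
    nlinarith [hsqle, mul_nonneg hx1nn (Real.sqrt_nonneg (A ^ 2 - 1)), hx0pos]
  -- matching values at t₁ and t₂
  have hs1pos : 0 < Real.sqrt (1 + t₁ ^ 2) := Real.sqrt_pos.2 (by positivity)
  have hc1 : A / Real.sqrt (1 + t₁ ^ 2) = x₀ 0 := by
    have hprod : x₀ 0 * Real.sqrt (1 + t₁ ^ 2) = A := by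
      rw [hA, norm_eq2,
        show x₀ 0 ^ 2 + x₀ 1 ^ 2 = x₀ 0 ^ 2 * (1 + t₁ ^ 2) by
          linear_combination (-(t₁ * x₀ 0) - x₀ 1) * ht₁x,
        Real.sqrt_mul (sq_nonneg _), Real.sqrt_sq hx0pos.le]
    rw [eq_comm, eq_div_iff (ne_of_gt hs1pos)]
    exact hprod
  have hmatch₁ : (A / Real.sqrt (1 + t₁ ^ 2)) • vec2 1 t₁ = x₀ := by
    apply euclid_ext
    · simpa using hc1
    · simp only [PiLp.smul_apply, vec2_apply1, smul_eq_mul]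
      rw [hc1, mul_comm]
      exact ht₁x
  have hs2eq : Real.sqrt (1 + t₂ ^ 2) = A * t₂ := by
    rw [show (1:ℝ) + t₂ ^ 2 = (A * t₂) ^ 2 by nlinarith [ht₂sq]]
    exact Real.sqrt_sq (by positivity)
  have hc2 : A / Real.sqrt (1 + t₂ ^ 2) = t₂⁻¹ := by
    rw [hs2eq]
    field_simp
  have hmatch₂ : (A / Real.sqrt (1 + t₂ ^ 2)) • vec2 1 t₂ = vec2 t₂⁻¹ 1 := by
    apply euclid_ext
    · simpa using hc2
    · simp only [PiLp.smul_apply, vec2_apply1, smul_eq_mul]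
      rw [hc2]
      exact inv_mul_cancel₀ (ne_of_gt ht₂pos)
  have heq2 : EqOn xf (fun t => (A / Real.sqrt (1 + t ^ 2)) • vec2 1 t) (Icc t₁ t₂) := by
    intro s hs
    rw [hxf s]
    by_cases h : s ≤ t₁
    · have hseq : s = t₁ := le_antisymm h hs.1
      rw [if_pos h, hseq]
      exact hmatch₁.symm
    · rw [if_neg h]
      by_cases h2 : s < t₂
      · rw [if_pos h2]
      · have hseq : s = t₂ := le_antisymm hs.2 (not_lt.1 h2)
        rw [if_neg h2, hseq]
        exact hmatch₂.symm
  have heq3 : EqOn xf (fun t => vec2 t⁻¹ 1) (Icc t₂ 1) := by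
    intro s hs
    rw [hxf s]
    by_cases h : s ≤ t₁
    · have hseq : s = t₂ := le_antisymm (le_trans h ht₁t₂) hs.1
      have hseq' : t₁ = t₂ := le_antisymm ht₁t₂ (hseq ▸ h)
      rw [if_pos h]
      show x₀ = vec2 s⁻¹ 1
      rw [hseq, ← hmatch₂, ← hseq']
      exact hmatch₁.symm
    · rw [if_neg h, if_neg (not_lt.2 hs.1)]
  have heq1 : EqOn xf (fun _ => x₀) (Icc 0 t₁) := by
    intro s hs
    rw [hxf s, if_pos hs.2]
  refine ⟨⟨(A + (t₂⁻¹) ^ 2).toNNReal, ?_⟩, ?_, ?_⟩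
  · set K : NNReal := (A + (t₂⁻¹) ^ 2).toNNReal with hK
    have hbound : ∀ v : EuclideanSpace ℝ (Fin 2), ‖v‖ ≤ A + (t₂⁻¹) ^ 2 → ‖v‖₊ ≤ K := by
      intro v hv
      rw [hK, ← norm_toNNReal]
      exact Real.toNNReal_le_toNNReal hv
    have lipc : LipschitzOnWith K (fun _ : ℝ => x₀) (Icc 0 t₁) := by
      intro x _ y _
      simp
    have lip1 : LipschitzOnWith K xf (Icc 0 t₁) := lip_congr lipc heq1
    have lip2 : LipschitzOnWith K xf (Icc t₁ t₂) := by
      refine lip_congr (Convex.lipschitzOnWith_of_nnnorm_hasDerivWithin_le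
        (f' := fun t => (A / Real.sqrt (1 + t ^ 2)) • vec2 0 1
          + (-(A * t) / (Real.sqrt (1 + t ^ 2)) ^ 3) • vec2 1 t)
        (convex_Icc t₁ t₂) (fun t _ => (hasDerivAt_mid A t).hasDerivWithinAt)
        (fun t _ => ?_)) heq2
      apply hbound
      exact le_trans (norm_mid_le A t hApos.le) (by nlinarith [sq_nonneg t₂⁻¹])
    have lip3 : LipschitzOnWith K xf (Icc t₂ 1) := by
      refine lip_congr (Convex.lipschitzOnWith_of_nnnorm_hasDerivWithin_le
        (f' := fun t => (-(t ^ 2)⁻¹) • vec2 1 0)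
        (convex_Icc t₂ 1) (fun t htm => (hasDerivAt_third t
          (ne_of_gt (lt_of_lt_of_le ht₂pos htm.1))).hasDerivWithinAt)
        (fun t htm => ?_)) heq3
      apply hbound
      have htpos : 0 < t := lt_of_lt_of_le ht₂pos htm.1
      rw [norm_third_eq t]
      have hle : (t ^ 2)⁻¹ ≤ (t₂⁻¹) ^ 2 := by
        rw [← inv_pow]
        have h1 : t⁻¹ ≤ t₂⁻¹ := inv_anti₀ ht₂pos htm.1
        have h0 : (0:ℝ) ≤ t⁻¹ := by positivity
        nlinarith
      linarith
    exact lip_glue ht₁nn (le_trans ht₁t₂ ht₂le1) lip1 (lip_glue ht₁t₂ ht₂le1 lip2 lip3)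
  · intro t ht
    rw [hC t, hxf t]
    by_cases h1 : t ≤ t₁
    · rw [if_pos h1]
      refine ⟨hx1le, ?_⟩
      nlinarith [ht₁x, hx0pos]
    · push_neg at h1
      have htpos : 0 < t := lt_of_le_of_lt ht₁nn h1
      rw [if_neg (not_le.2 h1)]
      by_cases h2 : t < t₂
      · rw [if_pos h2]
        set s := Real.sqrt (1 + t ^ 2) with hsdef
        have hspos : 0 < s := Real.sqrt_pos.2 (by positivity)
        have hs2 : s ^ 2 = 1 + t ^ 2 := Real.sq_sqrt (by positivity)
        refine ⟨?_, ?_⟩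
        · simp only [PiLp.smul_apply, vec2_apply1, smul_eq_mul]
          rw [div_mul_eq_mul_div, div_le_one hspos]
          have hsq : (A * t) ^ 2 ≤ s ^ 2 := by
            rw [hs2]
            nlinarith [ht₂sq, h2.le, htpos, hA1]
          nlinarith [mul_nonneg hApos.le htpos.le, hspos]
        · simp only [PiLp.smul_apply, vec2_apply0, vec2_apply1, smul_eq_mul, mul_one]
          exact le_of_eq (mul_comm t (A / s))
      · rw [if_neg h2]
        refine ⟨by simp, ?_⟩
        simp only [vec2_apply0, vec2_apply1]
        rw [mul_inv_cancel₀ (ne_of_gt htpos)]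
  · have hnull : ∀ᵐ t ∂(volume.restrict (Ioo (0:ℝ) 1)), t ≠ t₁ ∧ t ≠ t₂ := by
      apply ae_restrict_of_ae
      have h1 : ∀ᵐ t : ℝ ∂volume, t ≠ t₁ := by
        rw [ae_iff]
        have he : {t : ℝ | ¬ t ≠ t₁} = {t₁} := by ext u; simp
        rw [he]
        exact measure_singleton t₁
      have h2 : ∀ᵐ t : ℝ ∂volume, t ≠ t₂ := by
        rw [ae_iff]
        have he : {t : ℝ | ¬ t ≠ t₂} = {t₂} := by ext u; simp
        rw [he]
        exact measure_singleton t₂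
      exact h1.and h2
    filter_upwards [ae_restrict_mem measurableSet_Ioo, hnull] with t ht hne
    obtain ⟨hne1, hne2⟩ := hne
    rcases lt_or_gt_of_ne hne1 with hlt1 | hgt1
    · refine ⟨0, ?_, ?_⟩
      · apply (hasDerivAt_const t x₀).congr_of_eventuallyEq
        filter_upwards [Iio_mem_nhds hlt1] with s hs
        rw [hxf s, if_pos (le_of_lt hs)]
      · intro y hy
        simp
    · rcases lt_or_gt_of_ne hne2 with hlt2 | hgt2
      · -- middle piece
        have htpos : 0 < t := ht.1
        set s := Real.sqrt (1 + t ^ 2) with hsdef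
        have hspos : 0 < s := Real.sqrt_pos.2 (by positivity)
        have hs2 : s ^ 2 = 1 + t ^ 2 := Real.sq_sqrt (by positivity)
        refine ⟨(A / s) • vec2 0 1 + (-(A * t) / s ^ 3) • vec2 1 t, ?_, ?_⟩
        · apply (hasDerivAt_mid A t).congr_of_eventuallyEq
          filter_upwards [Ioo_mem_nhds hgt1 hlt2] with u hu
          rw [hxf u, if_neg (not_le.2 hu.1), if_pos hu.2]
        · intro y hy
          rw [hC t] at hy
          obtain ⟨hy1, hy2⟩ := hy
          have hxft : xf t = (A / s) • vec2 1 t := by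
            rw [hxf t, if_neg (not_le.2 hgt1), if_pos hlt2]
          rw [hxft, inner_mid A s t y (ne_of_gt hspos) hs2]
          apply mul_nonpos_of_nonneg_of_nonpos (by positivity)
          linarith
      · -- third piece
        have htpos : 0 < t := ht.1
        refine ⟨(-(t ^ 2)⁻¹) • vec2 1 0, ?_, ?_⟩
        · apply (hasDerivAt_third t (ne_of_gt htpos)).congr_of_eventuallyEq
          filter_upwards [Ioi_mem_nhds hgt2] with u hu
          rw [hxf u, if_neg (not_le.2 (lt_of_le_of_lt ht₁t₂ hu)),
            if_neg (not_lt.2 (le_of_lt hu))]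
        · intro y hy
          rw [hC t] at hy
          obtain ⟨hy1, hy2⟩ := hy
          have hxft : xf t = vec2 t⁻¹ 1 := by
            rw [hxf t, if_neg (not_le.2 (lt_of_le_of_lt ht₁t₂ hgt2)),
              if_neg (not_lt.2 (le_of_lt hgt2))]
          rw [hxft, inner_third t y]
          apply mul_nonpos_of_nonneg_of_nonpos (by positivity)
          have hy0 : y 0 * t ≤ 1 := by nlinarith
          have : y 0 ≤ t⁻¹ := by
            rw [← one_div, le_div_iff₀ htpos]
            exact hy0
          linarith
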